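/- arXiv:2104.00101 — 6 statements merged into one kernel-verified Lean document; each statement's English description precedes it below -/
import Mathlib

section
/- Let α₁, …, α_r be continuously differentiable extended class 𝒦 functions, q : [t₀, ∞) → ℝ continuous, and p : [t₀, ∞) × ℝ^r → ℝ^r the associated cascade vector field as in the context. Let ψ : [t₀, ∞) → ℝ^r be a solution of ψ̇(t) = p(t, ψ(t)) with ψ(t₀) = v₀, and let m : [t₀, ∞) → ℝ^r be continuously differentiable with ṁ(t) ⪯ p(t, m(t)) for all t ≥ t₀ and m(t₀) ⪯ v₀. Then m(t) ⪯ ψ(t) componentwise for all t ≥ t₀. -/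
/-- Scalar comparison lemma: if `f' ≤ -α (f) + h`, `-α (g) + h ≤ g'` with `α`
strictly increasing, and `f a ≤ g a`, then `f ≤ g` on `[a, b]`. -/
lemma scalar_comparison_aux {a b : ℝ} {α h f f' g g' : ℝ → ℝ} (hα : StrictMono α)
    (hf : ∀ t ∈ Set.Icc a b, HasDerivAt f (f' t) t)
    (hg : ∀ t ∈ Set.Icc a b, HasDerivAt g (g' t) t)
    (hfb : ∀ t ∈ Set.Icc a b, f' t ≤ -α (f t) + h t)
    (hgb : ∀ t ∈ Set.Icc a b, -α (g t) + h t ≤ g' t)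
    (h0 : f a ≤ g a) : ∀ t ∈ Set.Icc a b, f t ≤ g t := by
  intro t ht
  have hab : a ≤ b := le_trans ht.1 ht.2
  have key : ∀ ε > (0:ℝ), ∀ x ∈ Set.Icc a b, f x ≤ g x + ε * (1 + x - a) := by
    intro ε hε
    refine image_le_of_deriv_right_lt_deriv_boundary'
      (f := f) (f' := f') (B := fun x => g x + ε * (1 + x - a)) (B' := fun x => g' x + ε)
      (a := a) (b := b)
      (fun x hx => (hf x hx).continuousAt.continuousWithinAt)
      (fun x hx => (hf x (Set.Ico_subset_Icc_self hx)).hasDerivWithinAt)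
      (by beta_reduce; nlinarith) ?_ ?_ ?_
    · exact fun x hx => ((hg x hx).continuousAt.continuousWithinAt.add
        ((continuous_const.mul ((continuous_const.add continuous_id).sub
          continuous_const)).continuousWithinAt))
    · intro x hx
      have hB : HasDerivAt (fun x => g x + ε * (1 + x - a)) (g' x + ε) x := by
        have h1 : HasDerivAt (fun x : ℝ => ε * (1 + x - a)) ε x := by
          simpa using (((hasDerivAt_id x).const_add (1:ℝ)).sub_const a).const_mul ε
        exact (hg x (Set.Ico_subset_Icc_self hx)).add h1
      exact hB.hasDerivWithinAt
    · intro x hx heq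
      beta_reduce
      beta_reduce at heq
      have hx' : x ∈ Set.Icc a b := Set.Ico_subset_Icc_self hx
      have hpos : 0 < ε * (1 + x - a) := by nlinarith [hx.1]
      have hlt : α (g x) < α (f x) := by
        apply hα; rw [heq]; linarith
      have := hfb x hx'
      have := hgb x hx'
      linarith
  -- let ε → 0
  have hC : (0:ℝ) < 1 + b - a := by linarith
  by_contra hcon
  push_neg at hcon
  set δ := (f t - g t) / (2 * (1 + b - a)) with hδ
  have hδpos : 0 < δ := div_pos (by linarith) (by linarith)
  have := key δ hδpos t ht
  have h1 : 1 + t - a ≤ 1 + b - a := by linarith [ht.2]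
  have h2 : δ * (1 + t - a) ≤ δ * (1 + b - a) := by nlinarith
  have h3 : δ * (1 + b - a) = (f t - g t) / 2 := by
    rw [hδ, div_mul_eq_mul_div, mul_comm 2, ← div_div, mul_div_cancel_right₀ _ hC.ne']
  linarith

/-- comparison principle for the cascade system (Proposition 2):
any C¹ function `m` with `ṁ(t) ⪯ p(t, m(t))` and `m(t₀) ⪯ v₀` stays below the
solution `ψ` of `ψ̇ = p(t, ψ)`, `ψ(t₀) = v₀`. -/
theorem cascade_comparison {r : ℕ} (hr : 1 ≤ r) (t₀ : ℝ)
    (α : ℕ → ℝ → ℝ)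
    (hα : ∀ k, 1 ≤ k → k ≤ r →
      ContDiff ℝ 1 (α k) ∧ StrictMono (α k) ∧ α k 0 = 0)
    (q : ℝ → ℝ) (hq : ContinuousOn q (Set.Ici t₀))
    (p : ℝ → (Fin r → ℝ) → (Fin r → ℝ))
    (hp : ∀ t, ∀ v : Fin r → ℝ, ∀ i : Fin r, p t v i =
      -α (i.val + 1) (v i) + (if hi : i.val + 1 < r then v ⟨i.val + 1, hi⟩ else q t))
    (v₀ : Fin r → ℝ)
    -- ψ solves ψ̇ = p(t, ψ), ψ(t₀) = v₀
    (ψ : ℝ → Fin r → ℝ) (hψ0 : ψ t₀ = v₀)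
    (hψ : ∀ t ∈ Set.Ici t₀, HasDerivAt ψ (p t (ψ t)) t)
    -- m is continuously differentiable with ṁ(t) ⪯ p(t, m(t)) and m(t₀) ⪯ v₀
    (m m' : ℝ → Fin r → ℝ)
    (hm : ∀ t ∈ Set.Ici t₀, HasDerivAt m (m' t) t)
    (hm'c : ContinuousOn m' (Set.Ici t₀))
    (hcomp : ∀ t ∈ Set.Ici t₀, ∀ i, m' t i ≤ p t (m t) i)
    (hm0 : ∀ i, m t₀ i ≤ v₀ i) :
    ∀ t ∈ Set.Ici t₀, ∀ i, m t i ≤ ψ t i := by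
  intro T hT
  have hsub : Set.Icc t₀ T ⊆ Set.Ici t₀ := Set.Icc_subset_Ici_self
  have hmd : ∀ (i : Fin r), ∀ t ∈ Set.Icc t₀ T,
      HasDerivAt (fun s => m s i) (m' t i) t :=
    fun i t ht => (hasDerivAt_pi.1 (hm t (hsub ht))) i
  have hψd : ∀ (i : Fin r), ∀ t ∈ Set.Icc t₀ T,
      HasDerivAt (fun s => ψ s i) (p t (ψ t) i) t :=
    fun i t ht => (hasDerivAt_pi.1 (hψ t (hsub ht))) i
  have key : ∀ d : ℕ, ∀ i : Fin r, r = i.val + 1 + d →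
      ∀ t ∈ Set.Icc t₀ T, m t i ≤ ψ t i := by
    intro d
    induction d with
    | zero =>
      intro i hi
      have hmono := (hα (i.val + 1) (by omega) (by omega)).2.1
      have hnr : ¬ (i.val + 1 < r) := by omega
      refine scalar_comparison_aux (α := α (i.val + 1)) (h := q) hmono
        (f := fun s => m s i) (f' := fun s => m' s i)
        (g := fun s => ψ s i) (g' := fun s => p s (ψ s) i)
        (hmd i) (hψd i) ?_ ?_ ?_
      · intro t ht
        have := hcomp t (hsub ht) i
        rw [hp] at this
        simpa [hnr] using this
      · intro t ht
        show -α (i.val + 1) (ψ t i) + q t ≤ p t (ψ t) i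
        rw [hp]
        simp [hnr]
      · show m t₀ i ≤ ψ t₀ i
        rw [hψ0]; exact hm0 i
    | succ d ih =>
      intro i hi
      have hi1 : i.val + 1 < r := by omega
      set j : Fin r := ⟨i.val + 1, hi1⟩ with hj
      have hjle : ∀ s ∈ Set.Icc t₀ T, m s j ≤ ψ s j := ih j (by simp [hj]; omega)
      have hmono := (hα (i.val + 1) (by omega) (by omega)).2.1
      refine scalar_comparison_aux (α := α (i.val + 1)) (h := fun s => ψ s j) hmono
        (f := fun s => m s i) (f' := fun s => m' s i)
        (g := fun s => ψ s i) (g' := fun s => p s (ψ s) i)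
        (hmd i) (hψd i) ?_ ?_ ?_
      · intro t ht
        have h1 := hcomp t (hsub ht) i
        rw [hp] at h1
        simp only [hi1, dif_pos] at h1
        have := hjle t ht
        linarith
      · intro t ht
        show -α (i.val + 1) (ψ t i) + ψ t j ≤ p t (ψ t) i
        rw [hp]
        simp [hi1, hj]
      · show m t₀ i ≤ ψ t₀ i
        rw [hψ0]; exact hm0 i
  intro i
  exact key (r - 1 - i.val) i (by omega) T ⟨hT, le_refl T⟩
end

section
/- Let α₁, …, α_r be continuously differentiable extended class 𝒦 functions and consider the cascade system on ℝ^r: ṁ_{k-1} = −α_k(m_{k-1}) + m_k for 1 ≤ k ≤ r − 1 and ṁ_{r-1} = −α_r(m_{r-1}), with state m = (m₀, …, m_{r-1}). Then the origin is globally asymptotically stable: (i) every solution m : [t₀, ∞) → ℝ^r satisfies m(t) → 0 as t → ∞, and (ii) for every ε > 0 there exists δ > 0 such that every solution m : [t₀, ∞) → ℝ^r with ‖m(t₀)‖ ≤ δ satisfies ‖m(t)‖ ≤ ε for all t ≥ t₀. -/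
open Set Filter

/-- Barrier lemma: if `f t₀ ≤ M` and the derivative is nonpositive whenever `f ≥ M`,
then `f` stays `≤ M` on `[t₀, ∞)`. -/
lemma barrier_le {f f' : ℝ → ℝ} {t₀ M : ℝ}
    (hf : ∀ t ∈ Set.Ici t₀, HasDerivAt f (f' t) t)
    (h0 : f t₀ ≤ M)
    (hd : ∀ t ∈ Set.Ici t₀, M ≤ f t → f' t ≤ 0) :
    ∀ t ∈ Set.Ici t₀, f t ≤ M := by
  intro t₁ ht₁
  by_contra hgt
  push_neg at hgt
  have ht₀t₁ : t₀ < t₁ := by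
    rcases lt_or_eq_of_le (Set.mem_Ici.1 ht₁) with h | h
    · exact h
    · exact absurd h0 (by rw [h]; exact not_le.2 hgt)
  set S : Set ℝ := Set.Icc t₀ t₁ ∩ f ⁻¹' (Set.Iic M) with hS
  have hne : S.Nonempty := ⟨t₀, ⟨le_refl _, le_of_lt ht₀t₁⟩, h0⟩
  have hbdd : BddAbove S := ⟨t₁, fun x hx => hx.1.2⟩
  have hcont : ContinuousOn f (Set.Icc t₀ t₁) := fun x hx =>
    ((hf x hx.1).continuousAt).continuousWithinAt
  have hclosed : IsClosed S :=
    hcont.preimage_isClosed_of_isClosed isClosed_Icc isClosed_Iic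
  set s := sSup S with hs
  have hsmem : s ∈ S := hclosed.csSup_mem hne hbdd
  have hst₀ : t₀ ≤ s := hsmem.1.1
  have hst₁ : s < t₁ := lt_of_le_of_ne hsmem.1.2 (by
    intro h; exact absurd hsmem.2 (by rw [h]; exact not_le.2 hgt))
  have hgtS : ∀ t, s < t → t ≤ t₁ → M < f t := by
    intro t hst htt₁
    by_contra hle
    push_neg at hle
    exact absurd (le_csSup hbdd ⟨⟨le_trans hst₀ (le_of_lt hst), htt₁⟩, hle⟩) (not_le.2 hst)
  have hanti : AntitoneOn f (Set.Icc s t₁) := by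
    apply antitoneOn_of_deriv_nonpos (convex_Icc s t₁)
    · exact hcont.mono (Set.Icc_subset_Icc hst₀ (le_refl _))
    · intro x hx
      rw [interior_Icc] at hx
      exact ((hf x (le_trans hst₀ (le_of_lt hx.1))).differentiableAt).differentiableWithinAt
    · intro x hx
      rw [interior_Icc] at hx
      have hx₀ : x ∈ Set.Ici t₀ := le_trans hst₀ (le_of_lt hx.1)
      rw [(hf x hx₀).deriv]
      exact hd x hx₀ (le_of_lt (hgtS x hx.1 (le_of_lt hx.2)))
  have := hanti ⟨le_refl _, le_of_lt hst₁⟩ ⟨le_of_lt hst₁, le_refl _⟩ (le_of_lt hst₁)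
  exact absurd (le_trans this hsmem.2) (not_le.2 hgt)

/-- Forced entry: if the derivative is `≤ -c < 0` whenever `f ≥ ε`, then `f` must
eventually drop below `ε`. -/
lemma must_enter {f f' : ℝ → ℝ} {T ε c : ℝ} (hc : 0 < c)
    (hf : ∀ t ∈ Set.Ici T, HasDerivAt f (f' t) t)
    (hd : ∀ t ∈ Set.Ici T, ε ≤ f t → f' t ≤ -c) :
    ∃ t₁, T ≤ t₁ ∧ f t₁ ≤ ε := by
  by_contra h
  push_neg at h
  have hge : ∀ t ∈ Set.Ici T, ε ≤ f t := fun t ht => le_of_lt (h t ht)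
  have hanti : AntitoneOn (fun t => f t + c * t) (Set.Ici T) := by
    apply antitoneOn_of_deriv_nonpos (convex_Ici T)
    · exact fun x hx => (((hf x hx).continuousAt).add (by fun_prop)).continuousWithinAt
    · intro x hx
      rw [interior_Ici] at hx
      exact (((hf x (Set.mem_Ici.2 (le_of_lt (Set.mem_Ioi.1 hx)))).add ((hasDerivAt_id x).const_mul c)).differentiableAt).differentiableWithinAt
    · intro x hx
      rw [interior_Ici] at hx
      have hx' : x ∈ Set.Ici T := Set.mem_Ici.2 (le_of_lt (Set.mem_Ioi.1 hx))
      have hD : HasDerivAt (fun t => f t + c * t) (f' x + c) x := by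
        exact ((hf x hx').add ((hasDerivAt_id x).const_mul c)).congr_deriv (by ring)
      rw [hD.deriv]
      have := hd x hx' (hge x hx')
      linarith
  have h1 : 0 ≤ (f T - ε) / c := div_nonneg (by linarith [hge T (le_refl T)]) (le_of_lt hc)
  have hTt₁ : T ≤ T + (f T - ε) / c + 1 := by linarith
  have key := hanti Set.self_mem_Ici hTt₁ hTt₁
  simp only at key
  have hft₁ : ε ≤ f (T + (f T - ε) / c + 1) := hge _ hTt₁
  have hcc : c * ((f T - ε) / c) = f T - ε := mul_div_cancel₀ _ (ne_of_gt hc)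
  have e : c * (T + (f T - ε) / c + 1) = c * T + (f T - ε) + c := by
    rw [mul_add, mul_add, hcc, mul_one]
  linarith

/-- Scalar invariance: solutions of `ẋ = -a(x) + u` with `|u| ≤ c`, `a M ≥ c`,
`a (-M) ≤ -c` and `|x t₀| ≤ M` satisfy `|x t| ≤ M` forever. -/
lemma scalar_bound {a x u : ℝ → ℝ} {t₀ c M : ℝ}
    (hmono : StrictMono a)
    (hx : ∀ t ∈ Set.Ici t₀, HasDerivAt x (-a (x t) + u t) t)
    (hu : ∀ t ∈ Set.Ici t₀, |u t| ≤ c)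
    (hM1 : c ≤ a M) (hM2 : a (-M) ≤ -c)
    (h0 : |x t₀| ≤ M) :
    ∀ t ∈ Set.Ici t₀, |x t| ≤ M := by
  have hub : ∀ t ∈ Set.Ici t₀, x t ≤ M := by
    apply barrier_le hx (abs_le.1 h0).2
    intro t ht hMx
    have h1 : a M ≤ a (x t) := hmono.le_iff_le.2 hMx
    have h2 := (abs_le.1 (hu t ht)).2
    linarith
  have hlb : ∀ t ∈ Set.Ici t₀, -x t ≤ M := by
    apply barrier_le (f' := fun t => -(-a (x t) + u t)) (fun t ht => (hx t ht).neg)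
      (by rw [Pi.neg_apply]; linarith [(abs_le.1 h0).1])
    intro t ht hMx
    have h1 : a (x t) ≤ a (-M) := hmono.le_iff_le.2 (by rw [Pi.neg_apply] at hMx; linarith)
    have h2 := (abs_le.1 (hu t ht)).1
    linarith
  exact fun t ht => abs_le.2 ⟨by linarith [hlb t ht], hub t ht⟩

/-- Scalar attractivity: solutions of `ẋ = -a(x) + u` with `a` strictly increasing,
`a 0 = 0`, and `u → 0`, converge to `0`. -/
lemma scalar_attract {a x u : ℝ → ℝ} {t₀ : ℝ}
    (hmono : StrictMono a) (ha0 : a 0 = 0)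
    (hx : ∀ t ∈ Set.Ici t₀, HasDerivAt x (-a (x t) + u t) t)
    (hu : Filter.Tendsto u Filter.atTop (nhds 0)) :
    Filter.Tendsto x Filter.atTop (nhds 0) := by
  have key : ∀ ε > (0 : ℝ), ∃ T, ∀ t ≥ T, |x t| ≤ ε := by
    intro ε hε
    have haε : 0 < a ε := by rw [← ha0]; exact hmono hε
    have haε' : a (-ε) < 0 := by rw [← ha0]; exact hmono (by linarith)
    set c : ℝ := min (a ε) (-a (-ε)) / 2 with hc_def
    have hc : 0 < c := by
      apply div_pos _ (by norm_num)
      exact lt_min haε (by linarith)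
    have hcε : c ≤ a ε / 2 := by
      rw [hc_def]
      exact div_le_div_of_nonneg_right (min_le_left _ _) (by norm_num)
        |>.trans_eq rfl
    have hcε' : c ≤ -a (-ε) / 2 := by
      rw [hc_def]
      exact div_le_div_of_nonneg_right (min_le_right _ _) (by norm_num)
    -- eventually |u t| ≤ c
    obtain ⟨T₀, hT₀⟩ := (Metric.tendsto_atTop.1 hu) c hc
    set T : ℝ := max T₀ t₀ with hT_def
    have huT : ∀ t ∈ Set.Ici T, |u t| ≤ c := by
      intro t ht
      have := hT₀ t (le_trans (le_max_left _ _) ht)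
      rw [Real.dist_eq, sub_zero] at this
      exact le_of_lt this
    have hxT : ∀ t ∈ Set.Ici T, HasDerivAt x (-a (x t) + u t) t :=
      fun t ht => hx t (Set.mem_Ici.2 (le_trans (le_max_right _ _) (Set.mem_Ici.1 ht)))
    -- upper side
    have hub : ∃ T₁ ≥ T, ∀ t ≥ T₁, x t ≤ ε := by
      have hd : ∀ t ∈ Set.Ici T, ε ≤ x t → -a (x t) + u t ≤ -c := by
        intro t ht hεx
        have h1 : a ε ≤ a (x t) := hmono.le_iff_le.2 hεx
        have h2 := (abs_le.1 (huT t ht)).2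
        linarith
      obtain ⟨t₁, ht₁T, ht₁⟩ := must_enter hc hxT hd
      refine ⟨t₁, ht₁T, fun t ht => ?_⟩
      exact barrier_le (fun s hs => hxT s (le_trans ht₁T hs)) ht₁
        (fun s hs hεs => by linarith [hd s (le_trans ht₁T hs) hεs, hc]) t ht
    -- lower side
    have hlb : ∃ T₂ ≥ T, ∀ t ≥ T₂, -x t ≤ ε := by
      have hxn : ∀ t ∈ Set.Ici T, HasDerivAt (fun s => -x s) (-(-a (x t) + u t)) t :=
        fun t ht => (hxT t ht).neg
      have hd : ∀ t ∈ Set.Ici T, ε ≤ -x t → -(-a (x t) + u t) ≤ -c := by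
        intro t ht hεx
        have h1 : a (x t) ≤ a (-ε) := hmono.le_iff_le.2 (by linarith)
        have h2 := (abs_le.1 (huT t ht)).1
        linarith
      obtain ⟨t₂, ht₂T, ht₂⟩ := must_enter hc hxn hd
      refine ⟨t₂, ht₂T, fun t ht => ?_⟩
      exact barrier_le (fun s hs => hxn s (le_trans ht₂T hs)) ht₂
        (fun s hs hεs => by linarith [hd s (le_trans ht₂T hs) hεs, hc]) t ht
    obtain ⟨T₁, _, hT₁⟩ := hub
    obtain ⟨T₂, _, hT₂⟩ := hlb
    refine ⟨max T₁ T₂, fun t ht => abs_le.2 ⟨?_, ?_⟩⟩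
    · linarith [hT₂ t (le_trans (le_max_right _ _) ht)]
    · exact hT₁ t (le_trans (le_max_left _ _) ht)
  rw [Metric.tendsto_atTop]
  intro ε hε
  obtain ⟨T, hT⟩ := key (ε / 2) (by linarith)
  refine ⟨T, fun t ht => ?_⟩
  rw [Real.dist_eq, sub_zero]
  linarith [hT t ht]

lemma eucl_abs_coord_le_norm {r : ℕ} (v : EuclideanSpace ℝ (Fin r)) (i : Fin r) :
    |v i| ≤ ‖v‖ := by
  rw [EuclideanSpace.norm_eq]
  have h1 : |v i| = Real.sqrt (‖v i‖ ^ 2) := by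
    rw [Real.sqrt_sq (norm_nonneg _), Real.norm_eq_abs]
  rw [h1]
  apply Real.sqrt_le_sqrt
  exact Finset.single_le_sum (fun j _ => sq_nonneg ‖v j‖) (Finset.mem_univ i)

lemma eucl_norm_le_of_coords {r : ℕ} (hr : 1 ≤ r) {v : EuclideanSpace ℝ (Fin r)} {c : ℝ}
    (hc : 0 ≤ c) (h : ∀ i, |v i| ≤ c) : ‖v‖ ≤ r * c := by
  rw [EuclideanSpace.norm_eq]
  have h1 : ∑ i, ‖v i‖ ^ 2 ≤ (r * c) ^ 2 := by
    calc ∑ i, ‖v i‖ ^ 2 ≤ ∑ _i : Fin r, c ^ 2 := by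
          apply Finset.sum_le_sum
          intro i _
          exact pow_le_pow_left₀ (norm_nonneg _) (by rw [Real.norm_eq_abs]; exact h i) 2
      _ = r * c ^ 2 := by simp [mul_comm]
      _ ≤ (r * c) ^ 2 := by
          have hr1 : (1 : ℝ) ≤ r := by exact_mod_cast hr
          nlinarith [sq_nonneg c]
  calc Real.sqrt (∑ i, ‖v i‖ ^ 2) ≤ Real.sqrt ((r * c) ^ 2) := Real.sqrt_le_sqrt h1
    _ = r * c := Real.sqrt_sq (by positivity)

/-- Claim 1: the origin of the auxiliary cascade system
`ṁ_{k−1} = −α_k(m_{k−1}) + m_k` (1 ≤ k ≤ r−1), `ṁ_{r−1} = −α_r(m_{r−1})`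
is globally asymptotically stable: global attractivity and Lyapunov
stability. -/
theorem cascade_origin_GAS {r : ℕ} (hr : 1 ≤ r) (t₀ : ℝ)
    (α : ℕ → ℝ → ℝ)
    (hα : ∀ k, 1 ≤ k → k ≤ r →
      ContDiff ℝ 1 (α k) ∧ StrictMono (α k) ∧ α k 0 = 0)
    (F : EuclideanSpace ℝ (Fin r) → EuclideanSpace ℝ (Fin r))
    (hF : ∀ (v : EuclideanSpace ℝ (Fin r)) (i : Fin r),
      F v i = -α (i.val + 1) (v i) +
        (if hi : i.val + 1 < r then v ⟨i.val + 1, hi⟩ else 0)) :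
    -- (i) every solution converges to the origin
    (∀ m : ℝ → EuclideanSpace ℝ (Fin r),
      (∀ t ∈ Set.Ici t₀, HasDerivAt m (F (m t)) t) →
      Filter.Tendsto m Filter.atTop (nhds 0)) ∧
    -- (ii) Lyapunov stability
    (∀ ε > (0 : ℝ), ∃ δ > (0 : ℝ), ∀ m : ℝ → EuclideanSpace ℝ (Fin r),
      (∀ t ∈ Set.Ici t₀, HasDerivAt m (F (m t)) t) →
      ‖m t₀‖ ≤ δ → ∀ t ∈ Set.Ici t₀, ‖m t‖ ≤ ε) := by
  -- coordinatewise derivative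
  have hcoord : ∀ (m : ℝ → EuclideanSpace ℝ (Fin r)),
      (∀ t ∈ Set.Ici t₀, HasDerivAt m (F (m t)) t) →
      ∀ (i : Fin r), ∀ t ∈ Set.Ici t₀,
        HasDerivAt (fun s => m s i)
          (-α (i.val + 1) (m t i) +
            (if hi : i.val + 1 < r then m t ⟨i.val + 1, hi⟩ else 0)) t := by
    intro m hm i t ht
    have h1 : HasDerivAt (fun s => (EuclideanSpace.proj (𝕜 := ℝ) i) (m s))
        ((EuclideanSpace.proj (𝕜 := ℝ) i) (F (m t))) t :=
      (EuclideanSpace.proj (𝕜 := ℝ) i).hasFDerivAt.comp_hasDerivAt t (hm t ht)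
    have h2 : (EuclideanSpace.proj (𝕜 := ℝ) i) (F (m t)) = F (m t) i := rfl
    rw [h2, hF (m t) i] at h1
    exact h1
  constructor
  · -- (i) attractivity
    intro m hm
    have claim : ∀ d : ℕ, ∀ i : Fin r, r - i.val ≤ d →
        Filter.Tendsto (fun t => m t i) Filter.atTop (nhds 0) := by
      intro d
      induction d with
      | zero => intro i hi; have := i.isLt; omega
      | succ d ih =>
        intro i hi
        have hαi := hα (i.val + 1) (by omega) (by omega)
        by_cases hlt : i.val + 1 < r
        · have hu := ih ⟨i.val + 1, hlt⟩ (by simp; omega)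
          have hx' : ∀ t ∈ Set.Ici t₀, HasDerivAt (fun s => m s i)
              (-α (i.val + 1) (m t i) + m t ⟨i.val + 1, hlt⟩) t := by
            intro t ht
            have := hcoord m hm i t ht
            rwa [dif_pos hlt] at this
          exact scalar_attract hαi.2.1 hαi.2.2 hx' hu
        · have hx' : ∀ t ∈ Set.Ici t₀, HasDerivAt (fun s => m s i)
              (-α (i.val + 1) (m t i) + (fun _ => (0 : ℝ)) t) t := by
            intro t ht
            have := hcoord m hm i t ht
            rwa [dif_neg hlt] at this
          exact scalar_attract hαi.2.1 hαi.2.2 hx' tendsto_const_nhds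
    set e := EuclideanSpace.equiv (Fin r) ℝ with he
    have h2 : Filter.Tendsto (fun t => e (m t)) Filter.atTop (nhds 0) := by
      rw [show (0 : Fin r → ℝ) = (fun _ => 0) from rfl] at *
      apply tendsto_pi_nhds.2
      intro i
      have := claim r i (by omega)
      exact this
    have h3 := ((e.symm.continuous.tendsto 0).comp h2)
    have h4 := h3.congr (fun t => e.symm_apply_apply (m t))
    simpa using h4
  · -- (ii) stability
    intro ε hε
    have hr0 : (0 : ℝ) < r := by exact_mod_cast hr
    set ε' : ℝ := ε / r with hε'def
    have hε' : 0 < ε' := div_pos hε hr0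
    -- recursive targets
    set T : ℕ → ℝ := fun n => Nat.rec ε'
      (fun k Tk => min ε' (min (α (k + 1) Tk) (-(α (k + 1) (-Tk))))) n with hT
    have hT0 : T 0 = ε' := rfl
    have hTsucc : ∀ k, T (k + 1) =
        min ε' (min (α (k + 1) (T k)) (-(α (k + 1) (-(T k))))) := fun k => rfl
    have hTpos : ∀ k, k < r → 0 < T k := by
      intro k
      induction k with
      | zero => intro _; exact hε'
      | succ k ih =>
        intro hk
        have hTk := ih (by omega)
        have hαk := hα (k + 1) (by omega) (by omega)
        have h1 : 0 < α (k + 1) (T k) := by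
          rw [← hαk.2.2]; exact hαk.2.1 hTk
        have h2 : α (k + 1) (-(T k)) < 0 := by
          rw [← hαk.2.2]; exact hαk.2.1 (by linarith)
        rw [hTsucc]
        exact lt_min hε' (lt_min h1 (by linarith))
    have hTle : ∀ k, T k ≤ ε' := by
      intro k
      cases k with
      | zero => exact le_refl _
      | succ k => rw [hTsucc]; exact min_le_left _ _
    haveI : Nonempty (Fin r) := ⟨⟨0, hr⟩⟩
    set δ : ℝ := Finset.univ.inf' Finset.univ_nonempty (fun i : Fin r => T i.val)
      with hδdef
    have hδpos : 0 < δ := by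
      rw [hδdef, Finset.lt_inf'_iff]
      exact fun i _ => hTpos i.val i.isLt
    have hδle : ∀ i : Fin r, δ ≤ T i.val := fun i =>
      Finset.inf'_le _ (Finset.mem_univ i)
    refine ⟨δ, hδpos, ?_⟩
    intro m hm hm0 t ht
    have claim : ∀ d : ℕ, ∀ i : Fin r, r - i.val ≤ d →
        ∀ s ∈ Set.Ici t₀, |m s i| ≤ T i.val := by
      intro d
      induction d with
      | zero => intro i hi; have := i.isLt; omega
      | succ d ih =>
        intro i hi
        have hαi := hα (i.val + 1) (by omega) (by omega)
        have h0 : |m t₀ i| ≤ T i.val :=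
          le_trans (eucl_abs_coord_le_norm (m t₀) i) (le_trans hm0 (hδle i))
        by_cases hlt : i.val + 1 < r
        · have hu := ih ⟨i.val + 1, hlt⟩ (by simp; omega)
          apply scalar_bound hαi.2.1 _ hu _ _ h0
          · intro s hs
            have := hcoord m hm i s hs
            rwa [dif_pos hlt] at this
          · have := hTsucc i.val
            calc T (i.val + 1) ≤ min (α (i.val + 1) (T i.val))
                  (-(α (i.val + 1) (-(T i.val)))) := by rw [this]; exact min_le_right _ _
              _ ≤ α (i.val + 1) (T i.val) := min_le_left _ _
          · have h1 : T (i.val + 1) ≤ -(α (i.val + 1) (-(T i.val))) := by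
              rw [hTsucc]
              exact le_trans (min_le_right _ _) (min_le_right _ _)
            linarith
        · apply scalar_bound hαi.2.1 (u := fun _ => (0 : ℝ)) (c := 0) _
            (fun s _ => by simp) _ _ h0
          · intro s hs
            have := hcoord m hm i s hs
            rwa [dif_neg hlt] at this
          · have hTi := hTpos i.val i.isLt
            rw [← hαi.2.2]
            exact le_of_lt (hαi.2.1 hTi)
          · have hTi := hTpos i.val i.isLt
            rw [neg_zero, ← hαi.2.2]
            exact le_of_lt (hαi.2.1 (by linarith))
    have hcb : ∀ i : Fin r, |m t i| ≤ ε' := by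
      intro i
      exact le_trans (claim r i (by omega) t ht) (hTle i.val)
    have := eucl_norm_le_of_coords hr (le_of_lt hε') hcb
    rw [hε'def] at this
    calc ‖m t‖ ≤ r * (ε / r) := this
      _ = ε := by field_simp
end

section
/- Let α be an extended class 𝒦 function and let m : [t₀, ∞) → ℝ be a solution of ṁ(t) = −α(m(t)). Then |m(t)| is nonincreasing in t and m(t) → 0 as t → ∞. -/
open Set Filter

/-- Auxiliary: a solution bounded below by `ε > 0` on `[t₀, ∞)` is impossible. -/
lemma scalar_classK_decay_aux (t₀ : ℝ) (α : ℝ → ℝ)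
    (hα_mono : StrictMono α) (hα0 : α 0 = 0)
    (m : ℝ → ℝ)
    (hm : ∀ t ∈ Set.Ici t₀, HasDerivAt m (-α (m t)) t)
    (ε : ℝ) (hε : 0 < ε) (hlow : ∀ t ∈ Set.Ici t₀, ε ≤ m t) : False := by
  have hαε : 0 < α ε := by
    have := hα_mono hε; rwa [hα0] at this
  set h : ℝ → ℝ := fun t => m t + α ε * t with hh
  have hder : ∀ t ∈ Set.Ici t₀, HasDerivAt h (-α (m t) + α ε) t := by
    intro t ht
    have : HasDerivAt (fun s => α ε * s) (α ε * 1) t := (hasDerivAt_id t).const_mul (α ε)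
    have := (hm t ht).add this; rw [mul_one] at this; exact this
  have hanti : AntitoneOn h (Set.Ici t₀) := by
    apply antitoneOn_of_deriv_nonpos (convex_Ici t₀)
    · exact fun t ht => (hder t ht).continuousAt.continuousWithinAt
    · intro t ht
      rw [interior_Ici] at ht
      exact (hder t (Set.Ioi_subset_Ici_self ht)).differentiableAt.differentiableWithinAt
    · intro t ht
      rw [interior_Ici] at ht
      rw [(hder t (Set.Ioi_subset_Ici_self ht)).deriv]
      have : α ε ≤ α (m t) := hα_mono.monotone (hlow t (Set.Ioi_subset_Ici_self ht))
      linarith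
  set T : ℝ := max t₀ ((m t₀ + α ε * t₀) / α ε) with hT
  have hT1 : t₀ ≤ T := le_max_left _ _
  have hT2 : (m t₀ + α ε * t₀) / α ε ≤ T := le_max_right _ _
  have h1 : h T ≤ h t₀ := hanti (Set.self_mem_Ici) hT1 hT1
  have h2 : ε ≤ m T := hlow T hT1
  have h3 : m t₀ + α ε * t₀ ≤ α ε * T := by
    rw [div_le_iff₀ hαε] at hT2; linarith
  simp only [hh] at h1
  linarith

/-- for the scalar system `ṁ = −α(m)` with `α` an extended class
𝒦 function, `|m(t)|` is nonincreasing and `m(t) → 0` as `t → ∞`. -/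
theorem scalar_classK_decay (t₀ : ℝ) (α : ℝ → ℝ)
    (hα_cont : Continuous α) (hα_mono : StrictMono α) (hα0 : α 0 = 0)
    (m : ℝ → ℝ)
    (hm : ∀ t ∈ Set.Ici t₀, HasDerivAt m (-α (m t)) t) :
    (∀ s ∈ Set.Ici t₀, ∀ t, s ≤ t → |m t| ≤ |m s|) ∧
    Filter.Tendsto m Filter.atTop (nhds 0) := by
  have hcontm : ContinuousOn m (Set.Ici t₀) :=
    fun t ht => (hm t ht).continuousAt.continuousWithinAt
  -- key sign fact : x * α x ≥ 0
  have key : ∀ x : ℝ, 0 ≤ x * α x := by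
    intro x
    rcases lt_trichotomy x 0 with hx | hx | hx
    · have : α x < 0 := by have := hα_mono hx; rwa [hα0] at this
      exact le_of_lt (mul_pos_of_neg_of_neg hx this)
    · simp [hx]
    · have : 0 < α x := by have := hα_mono hx; rwa [hα0] at this
      positivity
  -- part 1 : |m| is nonincreasing
  have part1 : ∀ s ∈ Set.Ici t₀, ∀ t, s ≤ t → |m t| ≤ |m s| := by
    have hsq : AntitoneOn (fun t => m t ^ 2) (Set.Ici t₀) := by
      apply antitoneOn_of_deriv_nonpos (convex_Ici t₀)
      · exact (hcontm.pow 2)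
      · intro t ht
        rw [interior_Ici] at ht
        exact ((hm t (Set.Ioi_subset_Ici_self ht)).pow 2).differentiableAt.differentiableWithinAt
      · intro t ht
        rw [interior_Ici] at ht
        rw [HasDerivAt.deriv (f := fun t => m t ^ 2) ((hm t (Set.Ioi_subset_Ici_self ht)).pow 2)]
        have := key (m t)
        push_cast
        ring_nf
        nlinarith [key (m t)]
    intro s hs t hst
    have ht : t ∈ Set.Ici t₀ := le_trans hs hst
    have := hsq hs ht hst
    have h1 : Real.sqrt (m t ^ 2) ≤ Real.sqrt (m s ^ 2) := Real.sqrt_le_sqrt this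
    rwa [Real.sqrt_sq_eq_abs, Real.sqrt_sq_eq_abs] at h1
  refine ⟨part1, ?_⟩
  -- part 2 : convergence to 0
  rw [Metric.tendsto_atTop]
  intro ε hε
  -- first find T ≥ t₀ with |m T| < ε
  have hexists : ∃ T ∈ Set.Ici t₀, |m T| < ε := by
    by_contra hcon
    push_neg at hcon
    -- so |m t| ≥ ε for all t ≥ t₀; show m has constant sign ≥ ε or ≤ -ε
    have ht₀ : ε ≤ |m t₀| := hcon t₀ Set.self_mem_Ici
    rcases le_abs'.mp ht₀ with hneg | hpos
    · -- m t₀ ≤ -ε : apply aux to -m with α' x = -α (-x)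
      have hlow : ∀ t ∈ Set.Ici t₀, ε ≤ -m t := by
        intro t ht
        rcases le_abs'.mp (hcon t ht) with h | h
        · linarith
        · -- m t ≥ ε > 0 > m t₀ : IVT gives a zero, contradiction
          exfalso
          have hsub : Set.Icc t₀ t ⊆ Set.Ici t₀ := Set.Icc_subset_Ici_self
          have : (0 : ℝ) ∈ Set.Icc (m t₀) (m t) := ⟨by linarith, by linarith⟩
          obtain ⟨c, hc, hc0⟩ := intermediate_value_Icc ht (hcontm.mono hsub) this
          have := hcon c (hsub hc)
          rw [hc0] at this
          simp at this
          linarith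
      exact scalar_classK_decay_aux t₀ (fun x => -α (-x))
        (fun a b hab => by simpa using hα_mono (neg_lt_neg hab))
        (by simp [hα0]) (fun t => -m t)
        (fun t ht => by have := (hm t ht).neg; simp only [neg_neg] at this ⊢; exact this) ε hε hlow
    · -- m t₀ ≥ ε
      have hlow : ∀ t ∈ Set.Ici t₀, ε ≤ m t := by
        intro t ht
        rcases le_abs'.mp (hcon t ht) with h | h
        · exfalso
          have hsub : Set.Icc t₀ t ⊆ Set.Ici t₀ := Set.Icc_subset_Ici_self
          have : (0 : ℝ) ∈ Set.Icc (m t) (m t₀) := ⟨by linarith, by linarith⟩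
          obtain ⟨c, hc, hc0⟩ := intermediate_value_Icc' ht (hcontm.mono hsub) this
          have := hcon c (hsub hc)
          rw [hc0] at this
          simp at this
          linarith
        · exact h
      exact scalar_classK_decay_aux t₀ α hα_mono hα0 m hm ε hε hlow
  obtain ⟨T, hT, hTlt⟩ := hexists
  refine ⟨T, fun t ht => ?_⟩
  rw [Real.dist_eq, sub_zero]
  exact lt_of_le_of_lt (part1 T hT t ht) hTlt
end

section
/- Let α be an extended class 𝒦 function and let q : [t₀, ∞) → ℝ be continuous and bounded with q(t) → 0 as t → ∞. Then every solution m : [t₀, ∞) → ℝ of the perturbed scalar system ṁ(t) = −α(m(t)) + q(t) is bounded on [t₀, ∞), and moreover m(t) → 0 as t → ∞. -/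
open Set

/-- Auxiliary lemma: if `f` has derivative `f'` on `[T,∞)` and `f' ≤ -k < 0`
whenever `f ≥ c`, then eventually `f ≤ c`. -/
lemma aux_eventually_le (f f' : ℝ → ℝ) (T c k : ℝ) (hk : 0 < k)
    (hf : ∀ t, T ≤ t → HasDerivAt f (f' t) t)
    (hd : ∀ t, T ≤ t → c ≤ f t → f' t ≤ -k) :
    ∃ T', T ≤ T' ∧ ∀ t, T' ≤ t → f t ≤ c := by
  -- Step 1: find a point `u ≥ T` with `f u ≤ c`.
  have step1 : ∃ u, T ≤ u ∧ f u ≤ c := by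
    by_cases h : f T ≤ c
    · exact ⟨T, le_refl T, h⟩
    push_neg at h
    set t₁ := T + (f T - c) / k + 1 with ht₁def
    have hpos : 0 < (f T - c) / k := div_pos (by linarith) hk
    have hT₁ : T ≤ t₁ := by simp only [ht₁def]; linarith
    by_contra hcon
    push_neg at hcon
    have hlt : ∀ u ∈ Icc T t₁, c < f u := fun u hu => hcon u hu.1
    -- antitone argument
    have hanti : AntitoneOn (fun u => f u + k * u) (Icc T t₁) := by
      apply antitoneOn_of_hasDerivWithinAt_nonpos (convex_Icc T t₁)
      · intro x hx
        exact ((hf x hx.1).add ((hasDerivAt_id x).const_mul k)).continuousAt.continuousWithinAt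
      · intro x hx
        rw [interior_Icc] at hx
        exact ((hf x hx.1.le).add ((hasDerivAt_id x).const_mul k)).hasDerivWithinAt
      · intro x hx
        rw [interior_Icc] at hx
        have hcx : c ≤ f x := (hlt x ⟨hx.1.le, hx.2.le⟩).le
        have := hd x hx.1.le hcx
        simp only [mul_one]
        linarith
    have h1 := hanti (left_mem_Icc.mpr hT₁) (right_mem_Icc.mpr hT₁) hT₁
    simp only at h1
    have hkt : k * ((f T - c) / k) = f T - c := mul_div_cancel₀ _ (ne_of_gt hk)
    have e : k * t₁ = k * T + (f T - c) + k := by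
      calc k * t₁ = k * T + k * ((f T - c) / k) + k * 1 := by rw [ht₁def]; ring
        _ = k * T + (f T - c) + k := by rw [hkt, mul_one]
    have h2 := hlt t₁ (right_mem_Icc.mpr hT₁)
    linarith
  obtain ⟨u, huT, huc⟩ := step1
  refine ⟨u, huT, fun t ht => ?_⟩
  -- Step 2: invariance on [u, t]
  have key := image_le_of_deriv_right_lt_deriv_boundary'
    (f := f) (f' := f') (a := u) (b := t) (B := fun _ => c) (B' := fun _ => 0)
    (fun x hx => (hf x (huT.trans hx.1)).continuousAt.continuousWithinAt)
    (fun x hx => (hf x (huT.trans hx.1)).hasDerivWithinAt)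
    huc continuousOn_const
    (fun x _ => (hasDerivAt_const x c).hasDerivWithinAt)
    (fun x hx hfx => by
      have := hd x (huT.trans hx.1) hfx.ge
      linarith)
  exact key (right_mem_Icc.mpr ht)

/-- for the perturbed scalar system `ṁ = −α(m) + q(t)` with `α`
an extended class 𝒦 function and `q` continuous, bounded and vanishing at
infinity, every solution on `[t₀,∞)` is bounded and converges to `0`. -/
theorem scalar_classK_perturbed_decay (t₀ : ℝ) (α : ℝ → ℝ)
    (hα_cont : Continuous α) (hα_mono : StrictMono α) (hα0 : α 0 = 0)
    (q : ℝ → ℝ)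
    (hq_cont : ContinuousOn q (Set.Ici t₀))
    (hq_bdd : ∃ M : ℝ, ∀ t ∈ Set.Ici t₀, |q t| ≤ M)
    (hq_lim : Filter.Tendsto q Filter.atTop (nhds 0))
    (m : ℝ → ℝ)
    (hm : ∀ t ∈ Set.Ici t₀, HasDerivAt m (-α (m t) + q t) t) :
    (∃ M : ℝ, ∀ t ∈ Set.Ici t₀, |m t| ≤ M) ∧
    Filter.Tendsto m Filter.atTop (nhds 0) := by
  -- key claim: for any ε > 0, eventually |m t| ≤ ε
  have key : ∀ ε : ℝ, 0 < ε → ∃ T, t₀ ≤ T ∧ ∀ t, T ≤ t → |m t| ≤ ε := by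
    intro ε hε
    have hαε : 0 < α ε := by rw [← hα0]; exact hα_mono hε
    have hαnε : α (-ε) < 0 := by rw [← hα0]; exact hα_mono (by linarith)
    set k := min (α ε) (-(α (-ε))) / 2 with hkdef
    have hk : 0 < k := by
      apply div_pos _ two_pos
      exact lt_min hαε (by linarith)
    have h2k₁ : 2 * k ≤ α ε := by
      have := min_le_left (α ε) (-(α (-ε)))
      simp only [hkdef]; linarith
    have h2k₂ : 2 * k ≤ -(α (-ε)) := by
      have := min_le_right (α ε) (-(α (-ε)))
      simp only [hkdef]; linarith
    obtain ⟨T, hT⟩ := (Metric.tendsto_atTop.mp hq_lim k hk)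
    have hqT : ∀ t, T ≤ t → |q t| < k := by
      intro t ht
      have := hT t ht
      rwa [Real.dist_eq, sub_zero] at this
    set T₀ := max T t₀ with hT₀def
    have hT₀t₀ : t₀ ≤ T₀ := le_max_right _ _
    -- upper bound
    obtain ⟨T₁, hT₁, hub⟩ := aux_eventually_le m (fun t => -α (m t) + q t) T₀ ε k hk
      (fun t ht => hm t (hT₀t₀.trans ht))
      (by
        intro t ht hεm
        have h1 : α ε ≤ α (m t) := hα_mono.monotone hεm
        have h2 : |q t| < k := hqT t ((le_max_left _ _).trans ht)
        have h3 := abs_lt.mp h2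
        show -α (m t) + q t ≤ -k
        linarith)
    -- lower bound
    obtain ⟨T₂, hT₂, hlb⟩ := aux_eventually_le (fun t => -(m t)) (fun t => α (m t) - q t)
      T₀ ε k hk
      (fun t ht => by
        have := (hm t (hT₀t₀.trans ht)).neg
        rw [show α (m t) - q t = -(-α (m t) + q t) by ring]; exact this)
      (by
        intro t ht hεm
        have h1 : α (m t) ≤ α (-ε) := hα_mono.monotone (by linarith)
        have h2 : |q t| < k := hqT t ((le_max_left _ _).trans ht)
        have h3 := abs_lt.mp h2
        show α (m t) - q t ≤ -k
        linarith)
    refine ⟨max T₁ T₂, hT₀t₀.trans (hT₁.trans (le_max_left _ _)), fun t ht => ?_⟩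
    rw [abs_le]
    constructor
    · have := hlb t ((le_max_right _ _).trans ht); linarith
    · exact hub t ((le_max_left _ _).trans ht)
  constructor
  · -- boundedness
    obtain ⟨T, hTt₀, hT⟩ := key 1 one_pos
    have hcont : ContinuousOn m (Icc t₀ T) := fun x hx =>
      (hm x hx.1).continuousAt.continuousWithinAt
    obtain ⟨C, hC⟩ := (isCompact_Icc (a := t₀) (b := T)).exists_bound_of_continuousOn hcont
    refine ⟨max C 1, fun t ht => ?_⟩
    rcases le_total t T with h | h
    · exact le_trans (by simpa using hC t ⟨ht, h⟩) (le_max_left _ _)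
    · exact le_trans (hT t h) (le_max_right _ _)
  · -- convergence
    rw [Metric.tendsto_atTop]
    intro ε hε
    obtain ⟨T, _, hT⟩ := key (ε / 2) (by linarith)
    refine ⟨T, fun t ht => ?_⟩
    rw [Real.dist_eq, sub_zero]
    calc |m t| ≤ ε / 2 := hT t ht
    _ < ε := by linarith
end

section
/- Let α₁, …, α_r be continuously differentiable extended class 𝒦 functions, q : [t₀, ∞) → ℝ continuous with q(t) ≥ 0 for all t, and p the associated cascade vector field as in the context. Then the nonnegative orthant ℝ^r_+ = {v ∈ ℝ^r : v_i ≥ 0 for all i} is forward invariant for ψ̇ = p(t, ψ): every solution ψ defined on an interval [t₀, T) with ψ(t₀) ⪰ 0 satisfies ψ(t) ⪰ 0 for all t ∈ [t₀, T). -/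
/-- Scalar invariance lemma: if `x a ≥ 0` and the derivative of `x` is nonnegative
whenever `x ≤ 0`, then `x b ≥ 0`. -/
lemma scalar_nonneg_invariant {x f : ℝ → ℝ} {a b : ℝ} (hab : a ≤ b)
    (hx : ∀ t ∈ Set.Icc a b, HasDerivAt x (f t) t)
    (hf : ∀ t ∈ Set.Icc a b, x t ≤ 0 → 0 ≤ f t)
    (h0 : 0 ≤ x a) : 0 ≤ x b := by
  by_contra hb'
  push_neg at hb'
  set S : Set ℝ := {t | t ∈ Set.Icc a b ∧ 0 ≤ x t} with hS
  have haS : a ∈ S := ⟨⟨le_refl a, hab⟩, h0⟩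
  have hne : S.Nonempty := ⟨a, haS⟩
  have hbdd : BddAbove S := ⟨b, fun t ht => ht.1.2⟩
  set s := sSup S with hs
  have hsa : a ≤ s := le_csSup hbdd haS
  have hsb : s ≤ b := csSup_le hne (fun t ht => ht.1.2)
  have hxs : 0 ≤ x s := by
    by_contra h
    push_neg at h
    have hcont : ContinuousAt x s := (hx s ⟨hsa, hsb⟩).continuousAt
    have hmem : x ⁻¹' Set.Iio 0 ∈ nhds s := hcont (Iio_mem_nhds h)
    rcases Metric.mem_nhds_iff.mp hmem with ⟨ε, hε, hball⟩
    obtain ⟨t, htS, hts⟩ := exists_lt_of_lt_csSup hne (show s - ε < s by linarith)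
    have htle : t ≤ s := le_csSup hbdd htS
    have : t ∈ Metric.ball s ε := by
      simp only [Metric.mem_ball, Real.dist_eq]
      rw [abs_lt]; constructor <;> linarith
    have := hball this
    simp only [Set.mem_preimage, Set.mem_Iio] at this
    linarith [htS.2]
  have hsb' : s < b := by
    rcases lt_or_eq_of_le hsb with h | h
    · exact h
    · exfalso; rw [h] at hxs; linarith
  have hneg : ∀ t ∈ Set.Ioc s b, x t < 0 := by
    intro t ht
    by_contra h
    push_neg at h
    have : t ∈ S := ⟨⟨le_trans hsa ht.1.le, ht.2⟩, h⟩
    have := le_csSup hbdd this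
    linarith [ht.1]
  have hmono : MonotoneOn x (Set.Icc s b) := by
    apply monotoneOn_of_deriv_nonneg (convex_Icc s b)
    · intro t ht
      exact (hx t ⟨le_trans hsa ht.1, ht.2⟩).continuousAt.continuousWithinAt
    · intro t ht
      rw [interior_Icc] at ht
      exact (hx t ⟨le_trans hsa ht.1.le, ht.2.le⟩).differentiableAt.differentiableWithinAt
    · intro t ht
      rw [interior_Icc] at ht
      have htab : t ∈ Set.Icc a b := ⟨le_trans hsa ht.1.le, ht.2.le⟩
      rw [(hx t htab).deriv]
      exact hf t htab (le_of_lt (hneg t ⟨ht.1, ht.2.le⟩))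
  have := hmono (Set.left_mem_Icc.mpr hsb'.le) (Set.right_mem_Icc.mpr hsb'.le) hsb'.le
  linarith

/-- the nonnegative orthant is forward invariant for the cascade
system `ψ̇ = p(t, ψ)` when the forcing term `q` is nonnegative. -/
theorem cascade_orthant_forward_invariant {r : ℕ} (hr : 1 ≤ r) (t₀ : ℝ)
    (α : ℕ → ℝ → ℝ)
    (hα : ∀ k, 1 ≤ k → k ≤ r →
      ContDiff ℝ 1 (α k) ∧ StrictMono (α k) ∧ α k 0 = 0)
    (q : ℝ → ℝ) (hq_cont : ContinuousOn q (Set.Ici t₀))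
    (hq_nonneg : ∀ t ∈ Set.Ici t₀, 0 ≤ q t)
    (p : ℝ → (Fin r → ℝ) → (Fin r → ℝ))
    (hp : ∀ t, ∀ v : Fin r → ℝ, ∀ i : Fin r, p t v i =
      -α (i.val + 1) (v i) + (if hi : i.val + 1 < r then v ⟨i.val + 1, hi⟩ else q t))
    (T : ℝ) (ψ : ℝ → Fin r → ℝ)
    (hψ : ∀ t ∈ Set.Ico t₀ T, HasDerivAt ψ (p t (ψ t)) t)
    (hψ0 : ∀ i, 0 ≤ ψ t₀ i) :
    ∀ t ∈ Set.Ico t₀ T, ∀ i, 0 ≤ ψ t i := by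
  -- componentwise derivatives
  have hcomp : ∀ t ∈ Set.Ico t₀ T, ∀ i : Fin r,
      HasDerivAt (fun s => ψ s i) (p t (ψ t) i) t := by
    intro t ht i
    exact (hasDerivAt_pi.mp (hψ t ht)) i
  -- downward induction on components
  have main : ∀ n : ℕ, ∀ i : Fin r, r - i.val ≤ n →
      ∀ t ∈ Set.Ico t₀ T, 0 ≤ ψ t i := by
    intro n
    induction n with
    | zero => intro i hi; exact absurd hi (by have := i.isLt; omega)
    | succ n ih =>
      intro i hi t ht
      -- input nonnegativity on [t₀, T)
      have hinput : ∀ s ∈ Set.Ico t₀ T,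
          0 ≤ (if hi' : i.val + 1 < r then ψ s ⟨i.val + 1, hi'⟩ else q s) := by
        intro s hs
        by_cases hi' : i.val + 1 < r
        · rw [dif_pos hi']
          exact ih ⟨i.val + 1, hi'⟩ (by simp; omega) s hs
        · rw [dif_neg hi']
          exact hq_nonneg s hs.1
      -- apply the scalar lemma on [t₀, t]
      have hIcc : Set.Icc t₀ t ⊆ Set.Ico t₀ T := fun u hu => ⟨hu.1, lt_of_le_of_lt hu.2 ht.2⟩
      refine scalar_nonneg_invariant (x := fun s => ψ s i)
        (f := fun s => p s (ψ s) i) ht.1 ?_ ?_ (hψ0 i)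
      · intro u hu
        exact hcomp u (hIcc hu) i
      · intro u hu hxu
        have huI := hIcc hu
        show 0 ≤ p u (ψ u) i
        change ψ u i ≤ 0 at hxu
        rw [hp u (ψ u) i]
        have hα' := hα (i.val + 1) (by omega) i.isLt
        have hαle : α (i.val + 1) (ψ u i) ≤ 0 := by
          calc α (i.val + 1) (ψ u i) ≤ α (i.val + 1) 0 := hα'.2.1.monotone hxu
          _ = 0 := hα'.2.2
        have := hinput u huI
        linarith
  intro t ht i
  exact main r i (by omega) t ht
end

section
/- Let α₁, …, α_r be continuously differentiable extended class 𝒦 functions. Then the nonnegative orthant ℝ^r_+ is uniformly stable for the cascade system: for every ε > 0 there exists δ > 0 such that for every continuous q : [t₀, ∞) → ℝ with q(t) ≥ 0 for all t, and every solution ψ : [t₀, ∞) → ℝ^r of ψ̇ = p(t, ψ) (with p the associated cascade vector field) satisfying dist(ψ(t₀), ℝ^r_+) ≤ δ, it holds that dist(ψ(t), ℝ^r_+) ≤ ε for all t ≥ t₀. -/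
open Set Metric

/-- Scalar barrier lemma: if `f t₀ > c` and whenever `f t = c` (for `t ≥ t₀`) the
derivative is strictly positive, then `f t > c` on all of `Ici t₀`. -/
private lemma barrier_lemma {t₀ c : ℝ} {f f' : ℝ → ℝ}
    (hf : ∀ t ∈ Set.Ici t₀, HasDerivAt f (f' t) t)
    (h0 : c < f t₀)
    (hd : ∀ t ∈ Set.Ici t₀, f t = c → 0 < f' t) :
    ∀ t ∈ Set.Ici t₀, c < f t := by
  by_contra h
  push_neg at h
  obtain ⟨t₁, ht₁, hft₁⟩ := h
  have hcont : ContinuousOn f (Set.Ici t₀) := fun t ht =>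
    ((hf t ht).continuousAt).continuousWithinAt
  set S : Set ℝ := Set.Icc t₀ t₁ ∩ f ⁻¹' Set.Iic c with hS
  have hSsub : S ⊆ Set.Ici t₀ := fun t ht => ht.1.1
  have hScl : IsClosed S := by
    refine ContinuousOn.preimage_isClosed_of_isClosed
      (hcont.mono ?_) isClosed_Icc isClosed_Iic
    exact Set.Icc_subset_Ici_self
  have hSne : S.Nonempty := ⟨t₁, ⟨ht₁, le_refl _⟩, hft₁⟩
  have hSbdd : BddBelow S := ⟨t₀, fun t ht => ht.1.1⟩
  set a := sInf S with ha
  have haS : a ∈ S := hScl.csInf_mem hSne hSbdd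
  have hat₀ : t₀ ≤ a := haS.1.1
  have hfa_le : f a ≤ c := haS.2
  have ht₀a : t₀ < a := by
    rcases lt_or_eq_of_le hat₀ with h | h
    · exact h
    · exfalso; rw [← h] at hfa_le; linarith
  -- on [t₀, a), f > c
  have hlt : ∀ t, t₀ ≤ t → t < a → c < f t := by
    intro t h1 h2
    by_contra hcc
    push_neg at hcc
    have : t ∈ S := ⟨⟨h1, le_trans h2.le haS.1.2⟩, hcc⟩
    exact absurd (csInf_le hSbdd this) (not_le.mpr h2)
  -- f a ≥ c by left continuity
  have hfa : f a = c := by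
    refine le_antisymm hfa_le ?_
    have htend : Filter.Tendsto f (nhdsWithin a (Set.Iio a)) (nhds (f a)) :=
      ((hf a hat₀).continuousAt.tendsto).comp
        (nhdsWithin_le_nhds)
    refine ge_of_tendsto htend ?_
    filter_upwards [Ioo_mem_nhdsLT_of_mem ⟨ht₀a, le_refl a⟩] with t ht
    exact (hlt t ht.1.le ht.2).le
  -- slope from the left is nonpositive
  have hslope : f' a ≤ 0 := by
    have htend : Filter.Tendsto (slope f a) (nhdsWithin a (Set.Iio a)) (nhds (f' a)) :=
      (hasDerivAt_iff_tendsto_slope.mp (hf a hat₀)).mono_left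
        (nhdsWithin_mono a (fun x hx => ne_of_lt hx))
    refine le_of_tendsto htend ?_
    filter_upwards [Ioo_mem_nhdsLT_of_mem ⟨ht₀a, le_refl a⟩] with t ht
    have h1 : 0 < f t - f a := by
      have := hlt t ht.1.le ht.2; rw [hfa]; linarith
    have h2 : t - a < 0 := sub_neg.mpr ht.2
    rw [slope_def_field]
    exact div_nonpos_of_nonneg_of_nonpos h1.le h2.le
  exact absurd (hd a hat₀ hfa) (not_lt.mpr hslope)

/-- Componentwise distance bound in Euclidean space. -/
private lemma comp_dist_le {n : ℕ} (x y : EuclideanSpace ℝ (Fin n)) (i : Fin n) :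
    dist (x i) (y i) ≤ dist x y := by
  rw [EuclideanSpace.dist_eq]
  have h1 : dist (x i) (y i) = Real.sqrt (dist (x i) (y i) ^ 2) :=
    (Real.sqrt_sq dist_nonneg).symm
  rw [h1]
  exact Real.sqrt_le_sqrt
    (Finset.single_le_sum (f := fun j => dist (x j) (y j) ^ 2) (fun j _ => sq_nonneg _) (Finset.mem_univ i))

private noncomputable def bseq (α : ℕ → ℝ → ℝ) (c : ℝ) : ℕ → ℝ
  | 0 => c
  | (k+1) => min (bseq α c k) (-(α (k+1) (-(bseq α c k)))/2)

/-- the nonnegative orthant is uniformly stable for the cascade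
system: for every ε > 0 there is δ > 0, uniform over all nonnegative
continuous forcings `q` and all solutions `ψ`, such that
`dist(ψ(t₀), ℝ^r₊) ≤ δ` implies `dist(ψ(t), ℝ^r₊) ≤ ε` for all `t ≥ t₀`. -/
theorem cascade_orthant_uniformly_stable {r : ℕ} (hr : 1 ≤ r) (t₀ : ℝ)
    (α : ℕ → ℝ → ℝ)
    (hα : ∀ k, 1 ≤ k → k ≤ r →
      ContDiff ℝ 1 (α k) ∧ StrictMono (α k) ∧ α k 0 = 0) :
    ∀ ε > (0 : ℝ), ∃ δ > (0 : ℝ),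
      ∀ q : ℝ → ℝ, ContinuousOn q (Set.Ici t₀) → (∀ t ∈ Set.Ici t₀, 0 ≤ q t) →
      ∀ P : ℝ → EuclideanSpace ℝ (Fin r) → EuclideanSpace ℝ (Fin r),
        (∀ t, ∀ v : EuclideanSpace ℝ (Fin r), ∀ i : Fin r, P t v i =
          -α (i.val + 1) (v i) +
            (if hi : i.val + 1 < r then v ⟨i.val + 1, hi⟩ else q t)) →
      ∀ ψ : ℝ → EuclideanSpace ℝ (Fin r),
        (∀ t ∈ Set.Ici t₀, HasDerivAt ψ (P t (ψ t)) t) →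
        Metric.infDist (ψ t₀) {v : EuclideanSpace ℝ (Fin r) | ∀ i, 0 ≤ v i} ≤ δ →
        ∀ t ∈ Set.Ici t₀,
          Metric.infDist (ψ t) {v : EuclideanSpace ℝ (Fin r) | ∀ i, 0 ≤ v i} ≤ ε := by
  intro ε hε
  have hrpos : (0 : ℝ) < r := by exact_mod_cast hr
  have hsr : 0 < Real.sqrt r := Real.sqrt_pos.mpr hrpos
  set c : ℝ := ε / Real.sqrt r with hc
  have hcpos : 0 < c := div_pos hε hsr
  set b : ℕ → ℝ := bseq α c with hb
  -- positivity of b k for k ≤ r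
  have hαneg : ∀ k, 1 ≤ k → k ≤ r → ∀ x : ℝ, 0 < x → α k (-x) < 0 := by
    intro k h1 h2 x hx
    have h := (hα k h1 h2).2.1 (show -x < 0 by linarith)
    rw [(hα k h1 h2).2.2] at h
    exact h
  have hbpos : ∀ k, k ≤ r → 0 < b k := by
    intro k
    induction k with
    | zero => intro _; exact hcpos
    | succ k ih =>
      intro hk
      have hk' : k ≤ r := by omega
      have hbk := ih hk'
      have hneg : α (k+1) (-(b k)) < 0 := hαneg (k+1) (by omega) hk (b k) hbk
      have : 0 < -(α (k+1) (-(b k)))/2 := by linarith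
      exact lt_min hbk this
  have hbanti : ∀ k m, k ≤ m → b m ≤ b k := by
    intro k m hkm
    induction m with
    | zero => simp at hkm; simp [hkm]
    | succ m ih =>
      rcases Nat.lt_or_ge k (m+1) with h | h
      · exact le_trans (min_le_left _ _) (ih (by omega))
      · have : k = m + 1 := by omega
        simp [this]
  have hbc : ∀ k, b k ≤ c := fun k => hbanti 0 k (Nat.zero_le k)
  refine ⟨b r / 2, by have := hbpos r le_rfl; linarith, ?_⟩
  intro q hqcont hqpos P hP ψ hψ hinit t ht
  set K : Set (EuclideanSpace ℝ (Fin r)) := {v | ∀ i, 0 ≤ v i} with hK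
  have hKne : K.Nonempty := ⟨0, fun i => by simp⟩
  -- initial componentwise bound
  have hinit' : ∀ i : Fin r, -(b r / 2) ≤ ψ t₀ i := by
    intro i
    by_contra hcc
    push_neg at hcc
    have h1 : Metric.infDist (ψ t₀) K < -(ψ t₀ i) := lt_of_le_of_lt hinit (by linarith)
    obtain ⟨w, hwK, hww⟩ := (infDist_lt_iff hKne).mp h1
    have h2 : -(ψ t₀ i) ≤ dist (ψ t₀) w := by
      have h3 := comp_dist_le (ψ t₀) w i
      have h4 : -(ψ t₀ i) ≤ dist (ψ t₀ i) (w i) := by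
        rw [Real.dist_eq]
        calc -(ψ t₀ i) ≤ w i - ψ t₀ i := by have := hwK i; linarith
        _ ≤ |ψ t₀ i - w i| := by rw [abs_sub_comm]; exact le_abs_self _
      linarith
    linarith
  -- component derivatives
  have hcomp : ∀ (i : Fin r), ∀ t ∈ Set.Ici t₀,
      HasDerivAt (fun s => ψ s i) (P t (ψ t) i) t := by
    intro i t ht
    have := (EuclideanSpace.proj (𝕜 := ℝ) i).hasFDerivAt.comp_hasDerivAt t (hψ t ht)
    simp at this; exact this
  -- main downward induction
  have key : ∀ m, ∀ k, ∀ hk : k < r, r ≤ k + m →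
      ∀ s ∈ Set.Ici t₀, -(b k) < ψ s ⟨k, hk⟩ := by
    intro m
    induction m with
    | zero => intro k hk hkm; omega
    | succ m ih =>
      intro k hk hkm
      have hbk := hbpos k (le_of_lt hk)
      have hbr := hbpos r le_rfl
      refine barrier_lemma (f' := fun s => P s (ψ s) ⟨k, hk⟩)
        (fun s hs => hcomp ⟨k, hk⟩ s hs) ?_ ?_
      · have h1 := hinit' ⟨k, hk⟩
        have h2 : b r ≤ b k := hbanti k r (le_of_lt hk)
        have : -(b k) < -(b r / 2) := by linarith
        linarith
      · intro s hs hfs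
        have hfs' : ψ s ⟨k, hk⟩ = -(b k) := hfs
        show 0 < P s (ψ s) ⟨k, hk⟩
        rw [hP s (ψ s) ⟨k, hk⟩]
        simp only [Fin.val_mk]
        have hneg : α (k+1) (-(b k)) < 0 := hαneg (k+1) (by omega) hk (b k) hbk
        by_cases hk1 : k + 1 < r
        · rw [dif_pos hk1]
          have hnext : -(b (k+1)) < ψ s ⟨k+1, hk1⟩ := ih (k+1) hk1 (by omega) s hs
          have hble : b (k+1) ≤ -(α (k+1) (-(b k)))/2 := min_le_right _ _
          rw [hfs']
          linarith
        · rw [dif_neg hk1]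
          have hq := hqpos s hs
          rw [hfs']
          linarith
  -- conclude the distance bound
  have hkey : ∀ i : Fin r, -(b i.val) < ψ t i := by
    intro i
    have := key r i.val i.isLt (by omega) t ht
    simpa using this
  -- the projection to the orthant
  set w : EuclideanSpace ℝ (Fin r) := WithLp.toLp 2 (fun i => max (ψ t i) 0) with hw
  have hwK : w ∈ K := fun i => le_max_right _ _
  have hdw : dist (ψ t) w ≤ ε := by
    rw [EuclideanSpace.dist_eq]
    have hterm : ∀ i : Fin r, dist (ψ t i) (w i) ^ 2 ≤ c ^ 2 := by
      intro i
      have h1 : dist (ψ t i) (w i) ≤ c := by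
        rcases le_or_gt 0 (ψ t i) with h | h
        · have : w i = ψ t i := max_eq_left h
          rw [this, dist_self]; exact le_of_lt hcpos
        · have hwi : w i = 0 := max_eq_right h.le
          rw [hwi, Real.dist_eq, sub_zero, abs_of_neg h]
          have := hkey i
          have := hbc i.val
          linarith
      have h0 : 0 ≤ dist (ψ t i) (w i) := dist_nonneg
      nlinarith
    calc Real.sqrt (∑ i, dist (ψ t i) (w i) ^ 2)
        ≤ Real.sqrt (∑ _i : Fin r, c ^ 2) :=
          Real.sqrt_le_sqrt (Finset.sum_le_sum (fun i _ => hterm i))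
      _ = Real.sqrt (r * c ^ 2) := by rw [Finset.sum_const, Finset.card_univ,
            Fintype.card_fin, nsmul_eq_mul]
      _ = ε := by
          rw [hc, div_pow, Real.sq_sqrt hrpos.le]
          rw [mul_div_cancel₀ _ (ne_of_gt hrpos)]
          exact Real.sqrt_sq hε.le
  exact le_trans (infDist_le_dist_of_mem hwK) hdw
end
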